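/- The restriction of the Gross–Pitaevskii Hamiltonian H_V(u) = (1/4)∫(|u'|² - |u|⁴) + (1/2)∫ V|u|² to the soliton g·η with g = (a,v,γ,μ) and η = sech equals μv²/2 - μ³/6 + (μ²/2)(V * sech²(μ·))(a), i.e. H_V(g·η) = μv²/2 - μ³/6 + (μ/2)∫ V(x/μ + a) sech²(x) dx. -/

import Mathlib

open MeasureTheory Complex

noncomputable def sech (x : ℝ) : ℝ := 1 / Real.cosh x

/-- The action (g·u)(x) = e^{iγ} e^{iv(x-a)} μ u(μ(x-a)) for g = (a,v,γ,μ). -/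
noncomputable def Gact (g : ℝ × ℝ × ℝ × ℝ) (u : ℝ → ℂ) : ℝ → ℂ := fun x =>
  Complex.exp (Complex.I * g.2.2.1) *
    Complex.exp (Complex.I * g.2.1 * (x - g.1)) * g.2.2.2 * u (g.2.2.2 * (x - g.1))

/-- The Gross–Pitaevskii Hamiltonian H_V(u) = (1/4)∫(|u'|² - |u|⁴) + (1/2)∫ V|u|². -/
noncomputable def HV (V : ℝ → ℝ) (u : ℝ → ℂ) : ℝ :=
  (1/4) * (∫ x : ℝ, ‖deriv u x‖^2 - ‖u x‖^4) + (1/2) * ∫ x : ℝ, V x * ‖u x‖^2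

section Aux
open Filter Topology Set

lemma sech_pos (x : ℝ) : 0 < sech x := by
  simp [sech, Real.cosh_pos]

lemma sech_neg (x : ℝ) : sech (-x) = sech x := by simp [sech]

lemma hasDerivAt_sech (x : ℝ) : HasDerivAt sech (-(sech x * Real.tanh x)) x := by
  have h := (Real.hasDerivAt_cosh x).inv (ne_of_gt (Real.cosh_pos x))
  have : sech = fun y => (Real.cosh y)⁻¹ := by
    funext y; simp [sech, one_div]
  have e : -(sech x * Real.tanh x) = -Real.sinh x / Real.cosh x ^ 2 := by
    simp only [sech, Real.tanh_eq_sinh_div_cosh]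
    have := (Real.cosh_pos x).ne'
    field_simp
  rw [e, this]
  exact h

lemma hasDerivAt_tanh (x : ℝ) : HasDerivAt Real.tanh (sech x ^ 2) x := by
  have h := (Real.hasDerivAt_sinh x).div (Real.hasDerivAt_cosh x) (ne_of_gt (Real.cosh_pos x))
  have : Real.tanh = fun y => Real.sinh y / Real.cosh y := by
    funext y; exact Real.tanh_eq_sinh_div_cosh y
  rw [this]
  refine h.congr_deriv ?_
  have hc := Real.cosh_sq_sub_sinh_sq x
  rw [sech]
  field_simp
  nlinarith [Real.cosh_pos x]

lemma tanh_sq_add_sech_sq (x : ℝ) : Real.tanh x ^ 2 + sech x ^ 2 = 1 := by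
  have hc := Real.cosh_sq_sub_sinh_sq x
  have h0 := (Real.cosh_pos x).ne'
  rw [Real.tanh_eq_sinh_div_cosh, sech]
  field_simp
  nlinarith

lemma tanh_eq_aux (x : ℝ) : Real.tanh x = 1 - 2 / (Real.exp (2*x) + 1) := by
  have h1 : Real.exp (2*x) = Real.exp x * Real.exp x := by
    rw [two_mul, Real.exp_add]
  have h2 : Real.exp (-x) = (Real.exp x)⁻¹ := Real.exp_neg x
  have h3 : (0:ℝ) < Real.exp x := Real.exp_pos x
  have h4 : (0:ℝ) < Real.exp (2*x) + 1 := by positivity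
  rw [Real.tanh_eq_sinh_div_cosh, Real.sinh_eq, Real.cosh_eq, h1, h2]
  have h6 : (0:ℝ) < Real.exp x + (Real.exp x)⁻¹ := by positivity
  have h7 : (0:ℝ) < Real.exp x * Real.exp x + 1 := by positivity
  field_simp
  ring

lemma tendsto_tanh_atTop : Tendsto Real.tanh atTop (𝓝 1) := by
  have h : Tendsto (fun x : ℝ => 1 - 2 / (Real.exp (2*x) + 1)) atTop (𝓝 (1 - 0)) := by
    apply Tendsto.const_sub
    apply Tendsto.div_atTop tendsto_const_nhds
    apply Tendsto.atTop_add _ tendsto_const_nhds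
    exact Real.tendsto_exp_atTop.comp (tendsto_id.const_mul_atTop (by norm_num))
  rw [sub_zero] at h
  exact h.congr (fun x => (tanh_eq_aux x).symm)

lemma tendsto_tanh_atBot : Tendsto Real.tanh atBot (𝓝 (-1)) := by
  have h : Tendsto (fun x : ℝ => -Real.tanh (-x)) atBot (𝓝 (-1)) := by
    exact (tendsto_tanh_atTop.comp tendsto_neg_atBot_atTop).neg
  exact h.congr (fun x => by rw [Real.tanh_neg, neg_neg])

lemma continuous_tanh : Continuous Real.tanh := by
  have : Real.tanh = fun x => Real.sinh x / Real.cosh x := funext fun x => Real.tanh_eq_sinh_div_cosh x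
  rw [this]
  exact Real.continuous_sinh.div Real.continuous_cosh (fun x => (Real.cosh_pos x).ne')

lemma integrable_of_even_of_integrableOn_Ioi {g : ℝ → ℝ} (hg : ∀ x, g (-x) = g x)
    (h : IntegrableOn g (Ioi 0)) : Integrable g := by
  have int_Iic : IntegrableOn g (Iic 0) := by
    rw [show (volume : Measure ℝ) = Measure.map (fun x : ℝ => -x) volume from
      (Measure.map_neg_eq_self (volume : Measure ℝ)).symm]
    have m : MeasurableEmbedding fun x : ℝ => -x := (Homeomorph.neg ℝ).measurableEmbedding
    rw [m.integrableOn_map_iff]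
    simp_rw [Function.comp_def, hg, neg_preimage, neg_Iic, neg_zero]
    exact Iff.mpr integrableOn_Ici_iff_integrableOn_Ioi h
  rw [← integrableOn_univ, ← Iic_union_Ioi (a := (0:ℝ))]
  exact int_Iic.union h

lemma integrableOn_sech_sq_Ioi : IntegrableOn (fun x => sech x ^ 2) (Ioi 0) :=
  integrableOn_Ioi_deriv_of_nonneg continuous_tanh.continuousWithinAt
    (fun x _ => hasDerivAt_tanh x) (fun x _ => sq_nonneg _) tendsto_tanh_atTop

lemma integrable_sech_sq : Integrable (fun x => sech x ^ 2) :=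
  integrable_of_even_of_integrableOn_Ioi (fun x => by rw [sech_neg]) integrableOn_sech_sq_Ioi

lemma integral_sech_sq : ∫ x : ℝ, sech x ^ 2 = 2 := by
  have h1 : ∫ x in Ioi (0:ℝ), sech x ^ 2 = 1 - Real.tanh 0 :=
    integral_Ioi_of_hasDerivAt_of_nonneg continuous_tanh.continuousWithinAt
      (fun x _ => hasDerivAt_tanh x) (fun x _ => sq_nonneg _) tendsto_tanh_atTop
  have h2 : ∀ x : ℝ, sech x ^ 2 = (fun y => sech y ^ 2) |x| := by
    intro x
    rcases abs_cases x with ⟨h, _⟩ | ⟨h, _⟩ <;> simp only [h]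
    rw [sech_neg]
  calc ∫ x : ℝ, sech x ^ 2 = ∫ x : ℝ, (fun y => sech y ^ 2) |x| := by
        exact integral_congr_ae (Filter.Eventually.of_forall h2)
    _ = 2 * ∫ x in Ioi (0:ℝ), sech x ^ 2 := integral_comp_abs (f := fun y => sech y ^ 2)
    _ = 2 := by rw [h1]; simp [Real.tanh_zero]

lemma G4 : ∀ x : ℝ, HasDerivAt (fun y => Real.tanh y - Real.tanh y ^ 3 / 3) (sech x ^ 4) x := by
  intro x
  have h := (hasDerivAt_tanh x).sub (((hasDerivAt_tanh x).pow 3).div_const 3)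
  refine h.congr_deriv ?_
  have := tanh_sq_add_sech_sq x
  push_cast
  norm_num
  nlinarith [this]

lemma tendsto_G4_atTop : Tendsto (fun y => Real.tanh y - Real.tanh y ^ 3 / 3) atTop (𝓝 (2/3)) := by
  have h := tendsto_tanh_atTop.sub ((tendsto_tanh_atTop.pow 3).div_const 3)
  norm_num at h
  exact h

lemma integrableOn_sech_4_Ioi : IntegrableOn (fun x => sech x ^ 4) (Ioi 0) :=
  integrableOn_Ioi_deriv_of_nonneg
    (continuous_tanh.sub ((continuous_tanh.pow 3).div_const 3)).continuousWithinAt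
    (fun x _ => G4 x) (fun x _ => by positivity) tendsto_G4_atTop

lemma integrable_sech_4 : Integrable (fun x => sech x ^ 4) :=
  integrable_of_even_of_integrableOn_Ioi (fun x => by rw [sech_neg]) integrableOn_sech_4_Ioi

lemma integral_sech_4 : ∫ x : ℝ, sech x ^ 4 = 4/3 := by
  have h1 : ∫ x in Ioi (0:ℝ), sech x ^ 4 = 2/3 - (Real.tanh 0 - Real.tanh 0 ^ 3 / 3) :=
    integral_Ioi_of_hasDerivAt_of_nonneg
      (continuous_tanh.sub ((continuous_tanh.pow 3).div_const 3)).continuousWithinAt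
      (fun x _ => G4 x) (fun x _ => by positivity) tendsto_G4_atTop
  have h2 : ∀ x : ℝ, sech x ^ 4 = (fun y => sech y ^ 4) |x| := by
    intro x
    rcases abs_cases x with ⟨h, _⟩ | ⟨h, _⟩ <;> simp only [h]
    rw [sech_neg]
  calc ∫ x : ℝ, sech x ^ 4 = ∫ x : ℝ, (fun y => sech y ^ 4) |x| := by
        exact integral_congr_ae (Filter.Eventually.of_forall h2)
    _ = 2 * ∫ x in Ioi (0:ℝ), sech x ^ 4 := integral_comp_abs (f := fun y => sech y ^ 4)
    _ = 4/3 := by rw [h1]; simp [Real.tanh_zero]; ring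

lemma integral_scaled (g : ℝ → ℝ) {μ : ℝ} (a : ℝ) (hμ : 0 < μ) :
    ∫ x : ℝ, g (μ * (x - a)) = μ⁻¹ * ∫ y : ℝ, g y := by
  have h1 : ∫ x : ℝ, g (μ * (x - a)) = ∫ x : ℝ, (fun y => g (μ * y)) (x - a) := rfl
  rw [h1, integral_sub_right_eq_self (fun y => g (μ * y)) a,
    MeasureTheory.Measure.integral_comp_mul_left g μ]
  rw [abs_of_pos (inv_pos.mpr hμ), smul_eq_mul]

lemma integrable_scaled {g : ℝ → ℝ} (hg : Integrable g) {μ : ℝ} (a : ℝ) (hμ : 0 < μ) :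
    Integrable (fun x : ℝ => g (μ * (x - a))) :=
  (hg.comp_mul_left' hμ.ne').comp_sub_right a


lemma norm_helper (p q : ℝ) : ‖Complex.I * (p:ℂ) + (q:ℂ)‖^2 = p^2 + q^2 := by
  rw [Complex.sq_norm, Complex.normSq_apply]
  simp
  ring

theorem GP_Hamiltonian_on_solitons
    (V : ℝ → ℝ) (hVc : Continuous V) (MV : ℝ) (hVb : ∀ x, |V x| ≤ MV)
    (a v γ μ : ℝ) (hμ : 0 < μ) :
    HV V (Gact (a, v, γ, μ) (fun y => (sech y : ℂ)))
      = μ * v^2 / 2 - μ^3 / 6 + (μ/2) * ∫ x : ℝ, V (x/μ + a) * (sech x)^2 := by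
  have hμ0 : μ ≠ 0 := hμ.ne'
  set u := Gact (a, v, γ, μ) (fun y => (sech y : ℂ)) with hu_def
  set s : ℝ → ℝ := fun x => μ * (x - a) with hs_def
  -- closed form of u
  have hu : u = fun x : ℝ => (Complex.exp (Complex.I * γ) * μ) *
      (Complex.exp (Complex.I * v * ((x:ℂ) - a)) * ((sech (s x) : ℝ) : ℂ)) := by
    funext x
    simp only [hu_def, Gact, hs_def]
    push_cast
    ring
  -- derivative of u
  have hderiv : ∀ x : ℝ, HasDerivAt u
      ((Complex.exp (Complex.I * γ) * μ) *
        (Complex.exp (Complex.I * v * ((x:ℂ) - a)) *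
          (Complex.I * v * ((sech (s x) : ℝ) : ℂ) +
            ((-(sech (s x) * Real.tanh (s x)) * μ : ℝ) : ℂ)))) x := by
    intro x
    have h0 : HasDerivAt (fun y : ℝ => ((y : ℂ))) 1 x := by
      simpa using (hasDerivAt_id x).ofReal_comp
    have hlin : HasDerivAt (fun y : ℝ => Complex.I * v * ((y : ℂ) - a)) (Complex.I * v) x := by
      simpa using ((h0.sub_const (a:ℂ)).const_mul (Complex.I * (v:ℂ)))
    have hE : HasDerivAt (fun y : ℝ => Complex.exp (Complex.I * v * ((y:ℂ) - a)))
        (Complex.exp (Complex.I * v * ((x:ℂ) - a)) * (Complex.I * v)) x := hlin.cexp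
    have haff : HasDerivAt (fun y : ℝ => μ * (y - a)) μ x := by
      simpa using ((hasDerivAt_id x).sub_const a).const_mul μ
    have hSr : HasDerivAt (fun y : ℝ => sech (μ * (y - a)))
        (-(sech (s x) * Real.tanh (s x)) * μ) x :=
      (hasDerivAt_sech (s x)).comp x haff
    have hS : HasDerivAt (fun y : ℝ => ((sech (μ * (y - a)) : ℝ) : ℂ))
        ((-(sech (s x) * Real.tanh (s x)) * μ : ℝ) : ℂ) x := hSr.ofReal_comp
    have hprod := (hE.mul hS).const_mul (Complex.exp (Complex.I * γ) * (μ:ℂ))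
    rw [hu]
    refine hprod.congr_deriv ?_
    push_cast
    ring
  -- norms
  have e1 : ‖Complex.exp (Complex.I * (γ:ℂ))‖ = 1 := by
    simp [Complex.norm_exp]
  have e2 : ∀ x : ℝ, ‖Complex.exp (Complex.I * (v:ℂ) * ((x:ℂ) - a))‖ = 1 := by
    intro x
    simp [Complex.norm_exp]
  have hnu : ∀ x : ℝ, ‖u x‖^2 = μ^2 * sech (s x)^2 := by
    intro x
    rw [hu]
    simp only [norm_mul, Complex.norm_real, e1, e2 x]
    rw [Real.norm_eq_abs, Real.norm_eq_abs, abs_of_pos hμ, abs_of_pos (sech_pos (s x))]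
    ring
  have hnd : ∀ x : ℝ, ‖deriv u x‖^2
      = μ^2 * v^2 * sech (s x)^2 + μ^4 * (sech (s x)^2 - sech (s x)^4) := by
    intro x
    rw [(hderiv x).deriv]
    have hz : Complex.exp (Complex.I * ↑v * ((x:ℂ) - a)) *
          (Complex.I * v * ((sech (s x) : ℝ) : ℂ) +
            ((-(sech (s x) * Real.tanh (s x)) * μ : ℝ) : ℂ))
        = Complex.exp (Complex.I * ↑v * ((x:ℂ) - a)) *
          (Complex.I * ((v * sech (s x) : ℝ) : ℂ) + ((-(sech (s x) * Real.tanh (s x)) * μ : ℝ) : ℂ)) := by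
      push_cast; ring
    rw [hz]
    simp only [norm_mul, e1, e2 x, Complex.norm_real, mul_pow]
    rw [norm_helper]
    have ht : Real.tanh (s x) ^ 2 = 1 - sech (s x) ^ 2 := by
      have := tanh_sq_add_sech_sq (s x); linarith
    rw [Real.norm_eq_abs, abs_of_pos hμ]
    linear_combination (μ^4 * sech (s x)^2) * ht
  -- the kinetic integral
  have hkin : ∫ x : ℝ, ‖deriv u x‖^2 - ‖u x‖^4
      = (v^2*μ^2 + μ^4) * (μ⁻¹ * 2) - (2*μ^4) * (μ⁻¹ * (4/3)) := by
    have hpt : ∀ x : ℝ, ‖deriv u x‖^2 - ‖u x‖^4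
        = (v^2*μ^2 + μ^4) * ((fun y => sech y ^ 2) (μ * (x - a)))
          - (2*μ^4) * ((fun y => sech y ^ 4) (μ * (x - a))) := by
      intro x
      have h4 : ‖u x‖^4 = (μ^2 * sech (s x)^2)^2 := by
        rw [← hnu x]; ring
      rw [hnd x, h4]
      simp only [hs_def]
      ring
    have i2 := integral_scaled (fun y => sech y ^ 2) a hμ
    have i4 := integral_scaled (fun y => sech y ^ 4) a hμ
    rw [integral_sech_sq] at i2
    rw [integral_sech_4] at i4
    rw [integral_congr_ae (Filter.Eventually.of_forall hpt)]
    rw [integral_sub (((integrable_scaled integrable_sech_sq a hμ).const_mul _))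
      (((integrable_scaled integrable_sech_4 a hμ).const_mul _))]
    rw [integral_const_mul, integral_const_mul, i2, i4]
  -- the potential integral
  have hpot : ∫ x : ℝ, V x * ‖u x‖^2 = μ * ∫ x : ℝ, V (x/μ + a) * (sech x)^2 := by
    have hpt : ∀ x : ℝ, V x * ‖u x‖^2
        = μ^2 * ((fun y => V (y/μ + a) * (sech y)^2) (μ * (x - a))) := by
      intro x
      rw [hnu x]
      simp only [hs_def]
      have hxx : μ * (x - a) / μ + a = x := by field_simp; ring
      rw [hxx]
      ring
    have iV := integral_scaled (fun y => V (y/μ + a) * (sech y)^2) a hμ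
    rw [integral_congr_ae (Filter.Eventually.of_forall hpt), integral_const_mul, iV]
    field_simp
  rw [HV, hkin, hpot]
  field_simp
  ring

end Aux
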